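/- Basic mean value inequality: Let X be a real topological vector space (or a normed space), f : X → (-∞,+∞] lower semicontinuous, x ∈ dom f, x̄ ∈ X, and let λ be a real number with λ ≤ f(x̄) − f(x) (interpreting f(x̄) = +∞ as making the inequality hold for all λ). Then there exist t₀ ∈ [0,1) and the point x₀ := x + t₀(x̄ − x) ∈ [x, x̄) such that f(x₀) ≤ f(x) + t₀·λ and λ ≤ f^r(x₀; x̄ − x). -/

import Mathlib

open Filter Topology

/-- Lower radial subderivative `f^r(x;u)`. -/
noncomputable def radial {X : Type*} [NormedAddCommGroup X] [NormedSpace ℝ X]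
    (f : X → EReal) (x u : X) : EReal :=
  Filter.liminf (fun t : ℝ => ((t⁻¹ : ℝ) : EReal) * (f (x + t • u) - f x)) (𝓝[>] (0:ℝ))

/-- Upper radial subderivative `f^r_+(x;u)`. -/
noncomputable def radialPlus {X : Type*} [NormedAddCommGroup X] [NormedSpace ℝ X]
    (f : X → EReal) (x u : X) : EReal :=
  Filter.limsup (fun t : ℝ => ((t⁻¹ : ℝ) : EReal) * (f (x + t • u) - f x)) (𝓝[>] (0:ℝ))

/-- A lower semicontinuous `EReal`-valued function attains its minimum on a
nonempty compact closed set. -/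
lemma lsc_exists_min {g : ℝ → EReal} (hg : LowerSemicontinuous g) {s : Set ℝ}
    (hs : IsCompact s) (hcl : IsClosed s) (hne : s.Nonempty) :
    ∃ a ∈ s, ∀ b ∈ s, g a ≤ g b := by
  set m := sInf (g '' s) with hm
  by_cases htop : m = ⊤
  · obtain ⟨a, ha⟩ := hne
    refine ⟨a, ha, fun b hb => ?_⟩
    have : (⊤ : EReal) ≤ g b := htop ▸ sInf_le (Set.mem_image_of_mem g hb)
    simp [top_le_iff.mp this]
  · have hm' : m < ⊤ := lt_top_iff_ne_top.mpr htop
    haveI : Nonempty {a : EReal // m < a} := ⟨⟨⊤, hm'⟩⟩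
    set Z : {a : EReal // m < a} → Set ℝ := fun a => s ∩ g ⁻¹' Set.Iic a.1 with hZ
    have hdir : Directed (· ⊇ ·) Z := by
      intro a b
      rcases le_total a.1 b.1 with h | h
      · exact ⟨a, subset_rfl,
          Set.inter_subset_inter_right _ (Set.preimage_mono (Set.Iic_subset_Iic.mpr h))⟩
      · exact ⟨b,
          Set.inter_subset_inter_right _ (Set.preimage_mono (Set.Iic_subset_Iic.mpr h)),
          subset_rfl⟩
    have hZne : ∀ a, (Z a).Nonempty := by
      intro a
      obtain ⟨y, ⟨t, ht, rfl⟩, hy⟩ := sInf_lt_iff.mp a.2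
      exact ⟨t, ht, hy.le⟩
    have hZcl : ∀ a, IsClosed (Z a) := fun a => hcl.inter (hg.isClosed_preimage a.1)
    have hZc : ∀ a, IsCompact (Z a) := fun a => hs.inter_right (hg.isClosed_preimage a.1)
    obtain ⟨t₀, ht₀⟩ :=
      IsCompact.nonempty_iInter_of_directed_nonempty_isCompact_isClosed Z hdir hZne hZc hZcl
    simp only [Set.mem_iInter] at ht₀
    have hts : t₀ ∈ s := (ht₀ ⟨⊤, hm'⟩).1
    refine ⟨t₀, hts, fun b hb => ?_⟩
    have hle : g t₀ ≤ m := by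
      by_contra h
      push_neg at h
      obtain ⟨c, hc1, hc2⟩ := exists_between h
      exact absurd ((ht₀ ⟨c, hc1⟩).2 : g t₀ ≤ c) (not_le_of_gt hc2)
    exact hle.trans (sInf_le (Set.mem_image_of_mem g hb))

/-- Basic mean value inequality (Lemma: basic mean value inequality). -/
theorem basic_mean_value_inequality {X : Type*} [NormedAddCommGroup X] [NormedSpace ℝ X]
    (f : X → EReal) (hf : LowerSemicontinuous f) (hbot : ∀ y, f y ≠ ⊥)
    (x : X) (hx : f x ≠ ⊤) (xbar : X) (lam : ℝ) (hlam : (lam : EReal) ≤ f xbar - f x) :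
    ∃ t₀ ∈ Set.Ico (0:ℝ) 1,
      f (x + t₀ • (xbar - x)) ≤ f x + ((t₀ * lam : ℝ) : EReal) ∧
      (lam : EReal) ≤ radial f (x + t₀ • (xbar - x)) (xbar - x) := by
  set u := xbar - x with hu
  obtain ⟨r, hr⟩ : ∃ r : ℝ, f x = (r : EReal) :=
    ⟨(f x).toReal, (EReal.coe_toReal hx (hbot x)).symm⟩
  set g : ℝ → EReal := fun t => f (x + t • u) + ((-(t * lam) : ℝ) : EReal) with hg
  have hglsc : LowerSemicontinuous g := by
    apply LowerSemicontinuous.add'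
    · exact LowerSemicontinuous.comp hf (by fun_prop)
    · exact (continuous_coe_real_ereal.comp (by fun_prop)).lowerSemicontinuous
    · intro t
      exact EReal.continuousAt_add (Or.inr (EReal.coe_ne_bot _)) (Or.inr (EReal.coe_ne_top _))
  have hg0 : g 0 = f x := by simp [hg]
  have hxbar : x + (1:ℝ) • u = xbar := by rw [one_smul, hu]; abel
  have h01 : g 0 ≤ g 1 := by
    rw [hg0, hr]
    show (r : EReal) ≤ f (x + (1:ℝ) • u) + ((-(1 * lam) : ℝ) : EReal)
    rw [hxbar]
    have hadd : (lam : EReal) + (r : EReal) ≤ f xbar := by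
      rw [← EReal.le_sub_iff_add_le (Or.inl (EReal.coe_ne_bot r)) (Or.inl (EReal.coe_ne_top r))]
      rw [← hr]; exact hlam
    calc (r : EReal) = ((lam + r : ℝ) : EReal) + ((-(1 * lam) : ℝ) : EReal) := by
          rw [← EReal.coe_add]; norm_num
      _ ≤ f xbar + ((-(1 * lam) : ℝ) : EReal) := by
          apply add_le_add_left
          rw [EReal.coe_add]; exact hadd
  obtain ⟨t₁, ht₁s, ht₁min⟩ := lsc_exists_min hglsc isCompact_Icc isClosed_Icc
    (Set.nonempty_Icc.mpr zero_le_one)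
  obtain ⟨t₀, ht₀, hmin⟩ : ∃ t₀ ∈ Set.Ico (0:ℝ) 1, ∀ t ∈ Set.Icc (0:ℝ) 1, g t₀ ≤ g t := by
    rcases eq_or_ne t₁ 1 with rfl | hne
    · exact ⟨0, Set.mem_Ico.mpr ⟨le_refl 0, one_pos⟩, fun t ht => h01.trans (ht₁min t ht)⟩
    · exact ⟨t₁, ⟨ht₁s.1, lt_of_le_of_ne ht₁s.2 hne⟩, ht₁min⟩
  refine ⟨t₀, ht₀, ?_, ?_⟩
  · -- first inequality
    have ha : f (x + t₀ • u) + ((-(t₀ * lam) : ℝ) : EReal) ≤ (r : EReal) := by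
      have := hmin 0 ⟨le_refl 0, by norm_num⟩
      rw [hg0, hr] at this
      exact this
    have h2 := add_le_add_left ha ((t₀ * lam : ℝ) : EReal)
    rw [add_assoc, ← EReal.coe_add] at h2
    rw [hr, ← EReal.coe_add]
    simpa using h2
  · -- radial inequality
    have hfin : ∃ s₀ : ℝ, f (x + t₀ • u) = (s₀ : EReal) := by
      have ha : f (x + t₀ • u) + ((-(t₀ * lam) : ℝ) : EReal) ≤ (r : EReal) := by
        have := hmin 0 ⟨le_refl 0, by norm_num⟩
        rw [hg0, hr] at this; exact this
      have hnt : f (x + t₀ • u) ≠ ⊤ := by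
        intro h
        rw [h, EReal.top_add_of_ne_bot (EReal.coe_ne_bot _)] at ha
        exact (EReal.coe_ne_top r) (top_le_iff.mp ha)
      exact ⟨(f (x + t₀ • u)).toReal, (EReal.coe_toReal hnt (hbot _)).symm⟩
    obtain ⟨s₀, hs₀⟩ := hfin
    rw [radial]
    have hev : ∀ᶠ t in 𝓝[>] (0:ℝ), (lam : EReal) ≤
        ((t⁻¹ : ℝ) : EReal) * (f ((x + t₀ • u) + t • u) - f (x + t₀ • u)) := by
      have hmem : Set.Ioc (0:ℝ) (1 - t₀) ∈ 𝓝[>] (0:ℝ) :=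
        Ioc_mem_nhdsGT_of_mem ⟨le_refl 0, by linarith [ht₀.2]⟩
      filter_upwards [hmem] with t ht
      have htpos : 0 < t := ht.1
      have hkey : g t₀ ≤ g (t₀ + t) :=
        hmin (t₀ + t) ⟨by linarith [ht₀.1], by linarith [ht.2]⟩
      have hpt : x + (t₀ + t) • u = (x + t₀ • u) + t • u := by
        rw [add_smul]; abel
      rw [hg] at hkey
      simp only [hpt, hs₀] at hkey
      -- hkey : ↑s₀ + ↑(-(t₀*lam)) ≤ f ((x+t₀•u)+t•u) + ↑(-((t₀+t)*lam))
      set F := f ((x + t₀ • u) + t • u) with hF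
      have h3 := add_le_add_left hkey (((t₀ + t) * lam : ℝ) : EReal)
      rw [add_assoc, add_assoc, ← EReal.coe_add, ← EReal.coe_add, ← EReal.coe_add] at h3
      have heq : (-((t₀ + t) * lam) + (t₀ + t) * lam : ℝ) = 0 := by ring
      rw [heq] at h3
      simp only [EReal.coe_zero, add_zero] at h3
      -- h3 : ↑(s₀ + (-(t₀*lam) + (t₀+t)*lam)) ≤ F
      have h4 : ((t * lam : ℝ) : EReal) ≤ F - (s₀ : EReal) := by
        rw [EReal.le_sub_iff_add_le (Or.inl (EReal.coe_ne_bot s₀))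
          (Or.inl (EReal.coe_ne_top s₀)), ← EReal.coe_add]
        have : (t * lam + s₀ : ℝ) = s₀ + (-(t₀ * lam) + (t₀ + t) * lam) := by ring
        rw [this]; exact h3
      have h5 : ((t⁻¹ : ℝ) : EReal) * ((t * lam : ℝ) : EReal) ≤
          ((t⁻¹ : ℝ) : EReal) * (F - (s₀ : EReal)) := by
        apply mul_le_mul_of_nonneg_left h4
        exact_mod_cast inv_nonneg.mpr htpos.le
      rw [← EReal.coe_mul] at h5
      have : (t⁻¹ * (t * lam) : ℝ) = lam := by field_simp
      rw [this] at h5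
      rw [hs₀]
      exact h5
    exact Filter.le_liminf_of_le (by isBoundedDefault) hev
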